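/- Let G = (V, E) be a finite simple connected graph on n vertices with m edges, and consider the Markov chain on profiles where in each round one uniformly random node and one uniformly random unordered pair of distinct alternatives (from α ≥ 3 alternatives) are chosen, and the node swaps the pair in its linear order if the pair is adjacent in its order and more than half of its neighbors disagree with its relative ranking of the pair. Define the potential Φ(P) = ∑_{\{v_i,v_j\} ∈ E} |{(a,b) : a ≠ b, v_i and v_j disagree on the relative order of a,b}|/2 (counting unordered pairs). Then 0 ≤ Φ(P) ≤ m·C(α,2) for every profile P, and every effective update strictly decreases Φ by at least 1. -/

import Mathlib

open Finset

/-- Nodes with orders `σ, τ` (rank functions: alternative ↦ position) disagree on the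
pair of distinct alternatives `a, b` if one ranks `a` above `b` and the other ranks
`b` above `a`. -/
def PDdisagree {α : ℕ} (σ τ : Fin α ≃ Fin α) (a b : Fin α) : Prop :=
  ¬ ((σ a < σ b) ↔ (τ a < τ b))

instance {α : ℕ} (σ τ : Fin α ≃ Fin α) (a b : Fin α) :
    Decidable (PDdisagree σ τ a b) := by unfold PDdisagree; infer_instance

/-- The potential `Φ(P) = ∑_{edges {u,v}} #{unordered pairs {a,b} : u, v disagree}`,
counting each edge once (via a linear order on `V`) and each unordered pair of
alternatives once. -/
def PDpotential {V : Type*} [Fintype V] [LinearOrder V] (G : SimpleGraph V)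
    [DecidableRel G.Adj] {α : ℕ} (P : V → (Fin α ≃ Fin α)) : ℕ :=
  (univ.filter (fun q : (V × V) × Fin α × Fin α =>
    q.1.1 < q.1.2 ∧ G.Adj q.1.1 q.1.2 ∧ q.2.1 < q.2.2 ∧
      PDdisagree (P q.1.1) (P q.1.2) q.2.1 q.2.2)).card

/-- In the preference diffusion model (`α ≥ 3` alternatives) the potential satisfies
`0 ≤ Φ(P) ≤ m·C(α,2)` for every profile `P`, and any effective update — a node `v`
swapping two alternatives `a, b` adjacent in its order on which more than half of its
neighbors disagree with it — strictly decreases `Φ` by at least `1`. -/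
lemma pd_comm {α : ℕ} (σ τ : Fin α ≃ Fin α) (a b : Fin α) :
    PDdisagree σ τ a b ↔ PDdisagree τ σ a b := not_congr Iff.comm

lemma pd_symm {α : ℕ} (σ τ : Fin α ≃ Fin α) {a b : Fin α} (hab : a ≠ b) :
    PDdisagree σ τ a b ↔ PDdisagree σ τ b a := by
  have h1 : (σ a : ℕ) ≠ (σ b : ℕ) := by
    simpa [Fin.val_eq_val] using fun h => hab (σ.injective h)
  have h2 : (τ a : ℕ) ≠ (τ b : ℕ) := by
    simpa [Fin.val_eq_val] using fun h => hab (τ.injective h)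
  simp only [PDdisagree, Fin.lt_def]
  omega

lemma pd_flip {α : ℕ} (σ τ : Fin α ≃ Fin α) {a b : Fin α} (hab : a ≠ b) :
    PDdisagree ((Equiv.swap a b).trans σ) τ a b ↔ ¬ PDdisagree σ τ a b := by
  have h1 : (σ a : ℕ) ≠ (σ b : ℕ) := by
    simpa [Fin.val_eq_val] using fun h => hab (σ.injective h)
  simp only [PDdisagree, Equiv.trans_apply, Equiv.swap_apply_left,
    Equiv.swap_apply_right, Fin.lt_def]
  omega

lemma pd_keep {α : ℕ} (σ τ : Fin α ≃ Fin α) {a b c d : Fin α} (hab : a ≠ b)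
    (hadj : ((σ a : ℕ) + 1 = (σ b : ℕ)) ∨ ((σ b : ℕ) + 1 = (σ a : ℕ)))
    (hcd : c ≠ d) (h1 : ¬(c = a ∧ d = b)) (h2 : ¬(c = b ∧ d = a)) :
    PDdisagree ((Equiv.swap a b).trans σ) τ c d ↔ PDdisagree σ τ c d := by
  have key : ∀ x y : Fin α, x ≠ y → (σ x : ℕ) ≠ (σ y : ℕ) := fun x y h => by
    simpa [Fin.val_eq_val] using fun h' => h (σ.injective h')
  by_cases hca : c = a
  · subst hca
    have hdb : d ≠ b := fun h => h1 ⟨rfl, h⟩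
    have hda : d ≠ c := hcd.symm
    have e1 : ((Equiv.swap c b).trans σ) c = σ b := by simp
    have e2 : ((Equiv.swap c b).trans σ) d = σ d := by
      simp [Equiv.swap_apply_of_ne_of_ne hda hdb]
    rw [PDdisagree, PDdisagree, e1, e2]
    have k1 := key c b hab
    have k2 := key d b hdb
    have k3 := key d c hda
    simp only [Fin.lt_def]; omega
  · by_cases hcb : c = b
    · subst hcb
      have hda : d ≠ a := fun h => h2 ⟨rfl, h⟩
      have hdb : d ≠ c := hcd.symm
      have e1 : ((Equiv.swap a c).trans σ) c = σ a := by simp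
      have e2 : ((Equiv.swap a c).trans σ) d = σ d := by
        simp [Equiv.swap_apply_of_ne_of_ne hda hdb]
      rw [PDdisagree, PDdisagree, e1, e2]
      have k1 := key a c hab
      have k2 := key d a hda
      have k3 := key d c hdb
      simp only [Fin.lt_def]; omega
    · have e1 : ((Equiv.swap a b).trans σ) c = σ c := by
        simp [Equiv.swap_apply_of_ne_of_ne hca hcb]
      by_cases hda : d = a
      · subst hda
        have e2 : ((Equiv.swap d b).trans σ) d = σ b := by simp
        rw [PDdisagree, PDdisagree, e1, e2]
        have k1 := key d b hab
        have k2 := key c b hcb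
        have k3 := key c d hcd
        simp only [Fin.lt_def]; omega
      · by_cases hdb : d = b
        · subst hdb
          have e2 : ((Equiv.swap a d).trans σ) d = σ a := by simp
          rw [PDdisagree, PDdisagree, e1, e2]
          have k1 := key a d hab
          have k2 := key c a hca
          have k3 := key c d hcd
          simp only [Fin.lt_def]; omega
        · have e2 : ((Equiv.swap a b).trans σ) d = σ d := by
            simp [Equiv.swap_apply_of_ne_of_ne hda hdb]
          rw [PDdisagree, PDdisagree, e1, e2]

lemma edge_count {V : Type*} [Fintype V] [LinearOrder V] (G : SimpleGraph V)
    [DecidableRel G.Adj] :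
    (univ.filter fun p : V × V => p.1 < p.2 ∧ G.Adj p.1 p.2).card = G.edgeFinset.card := by
  have hswap : (univ.filter fun p : V × V => ¬ p.1 < p.2 ∧ G.Adj p.1 p.2).card
      = (univ.filter fun p : V × V => p.1 < p.2 ∧ G.Adj p.1 p.2).card := by
    apply Finset.card_bij (fun p _ => p.swap)
    · rintro ⟨x, y⟩ hp
      simp only [mem_filter, mem_univ, true_and] at hp ⊢
      exact ⟨lt_of_le_of_ne (not_lt.mp hp.1) hp.2.ne', hp.2.symm⟩
    · rintro ⟨x, y⟩ _ ⟨x', y'⟩ _ h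
      simpa [Prod.ext_iff, and_comm] using h
    · rintro ⟨x, y⟩ hq
      simp only [mem_filter, mem_univ, true_and] at hq
      exact ⟨(y, x), by simp [not_lt, hq.1.le, hq.2.symm], rfl⟩
  have h2 := SimpleGraph.two_mul_card_edgeFinset (G := G)
  have hsplit := Finset.card_filter_add_card_filter_not
    (s := univ.filter fun p : V × V => G.Adj p.1 p.2)
    (p := fun p : V × V => p.1 < p.2)
  simp only [Finset.filter_filter] at hsplit
  have hA : (univ.filter fun p : V × V => G.Adj p.1 p.2).card = 2 * G.edgeFinset.card := by
    rw [h2]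
  have hcomm1 : (univ.filter fun p : V × V => G.Adj p.1 p.2 ∧ p.1 < p.2)
      = (univ.filter fun p : V × V => p.1 < p.2 ∧ G.Adj p.1 p.2) := by
    simp [and_comm]
  have hcomm2 : (univ.filter fun p : V × V => G.Adj p.1 p.2 ∧ ¬ p.1 < p.2)
      = (univ.filter fun p : V × V => ¬ p.1 < p.2 ∧ G.Adj p.1 p.2) := by
    simp [and_comm]
  rw [hcomm1, hcomm2, hswap, hA] at hsplit
  omega

lemma pair_count (α : ℕ) :
    (univ.filter fun p : Fin α × Fin α => p.1 < p.2).card = Nat.choose α 2 := by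
  have h := edge_count (⊤ : SimpleGraph (Fin α))
  have hc : ((⊤ : SimpleGraph (Fin α)).edgeFinset).card = Nat.choose α 2 := by
    rw [SimpleGraph.card_edgeFinset_top_eq_card_choose_two, Fintype.card_fin]
  rw [hc] at h
  rw [← h]
  congr 1
  apply Finset.filter_congr
  intro p _
  simp only [SimpleGraph.top_adj]
  exact ⟨fun h => ⟨h, h.ne⟩, And.left⟩

lemma pd_bound {V : Type*} [Fintype V] [LinearOrder V] (G : SimpleGraph V)
    [DecidableRel G.Adj] {α : ℕ} (Q : V → (Fin α ≃ Fin α)) :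
    PDpotential G Q ≤ G.edgeFinset.card * Nat.choose α 2 := by
  unfold PDpotential
  calc (univ.filter (fun q : (V × V) × Fin α × Fin α =>
          q.1.1 < q.1.2 ∧ G.Adj q.1.1 q.1.2 ∧ q.2.1 < q.2.2 ∧
            PDdisagree (Q q.1.1) (Q q.1.2) q.2.1 q.2.2)).card
      ≤ (univ.filter (fun q : (V × V) × Fin α × Fin α =>
          (q.1.1 < q.1.2 ∧ G.Adj q.1.1 q.1.2) ∧ q.2.1 < q.2.2)).card := by
        apply Finset.card_le_card
        apply Finset.monotone_filter_right
        rintro q _ ⟨h1, h2, h3, _⟩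
        exact ⟨⟨h1, h2⟩, h3⟩
    _ = G.edgeFinset.card * Nat.choose α 2 := by
        rw [← Finset.univ_product_univ,
          Finset.filter_product (fun p : V × V => p.1 < p.2 ∧ G.Adj p.1 p.2)
            (fun p : Fin α × Fin α => p.1 < p.2),
          Finset.card_product, edge_count, pair_count]

lemma pd_main {V : Type*} [Fintype V] [LinearOrder V] (G : SimpleGraph V)
    [DecidableRel G.Adj] {α : ℕ}
    (P : V → (Fin α ≃ Fin α)) (v : V) (a b : Fin α) (hab : a < b)
    (hadj : ((P v a : ℕ) + 1 = (P v b : ℕ)) ∨ ((P v b : ℕ) + 1 = (P v a : ℕ)))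
    (hmaj : G.degree v <
      2 * ((G.neighborFinset v).filter (fun u => PDdisagree (P v) (P u) a b)).card) :
    PDpotential G (Function.update P v ((Equiv.swap a b).trans (P v))) + 1 ≤
      PDpotential G P := by
  classical
  set σ := P v with hσ
  set P' := Function.update P v ((Equiv.swap a b).trans σ) with hP'
  have hPv' : P' v = (Equiv.swap a b).trans σ := Function.update_self _ _ _
  have hPu' : ∀ u, u ≠ v → P' u = P u := fun u hu => Function.update_of_ne hu _ _
  -- the splitting predicate
  set sp : (V × V) × Fin α × Fin α → Prop :=
    fun q => q.2 = (a, b) ∧ (q.1.1 = v ∨ q.1.2 = v) with hsp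
  have hsplit : ∀ Q : V → (Fin α ≃ Fin α), PDpotential G Q =
      (univ.filter (fun q : (V × V) × Fin α × Fin α =>
        (q.1.1 < q.1.2 ∧ G.Adj q.1.1 q.1.2 ∧ q.2.1 < q.2.2 ∧
          PDdisagree (Q q.1.1) (Q q.1.2) q.2.1 q.2.2) ∧ sp q)).card +
      (univ.filter (fun q : (V × V) × Fin α × Fin α =>
        (q.1.1 < q.1.2 ∧ G.Adj q.1.1 q.1.2 ∧ q.2.1 < q.2.2 ∧
          PDdisagree (Q q.1.1) (Q q.1.2) q.2.1 q.2.2) ∧ ¬ sp q)).card := by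
    intro Q
    unfold PDpotential
    have h := Finset.card_filter_add_card_filter_not
      (s := univ.filter (fun q : (V × V) × Fin α × Fin α =>
        q.1.1 < q.1.2 ∧ G.Adj q.1.1 q.1.2 ∧ q.2.1 < q.2.2 ∧
          PDdisagree (Q q.1.1) (Q q.1.2) q.2.1 q.2.2)) (p := sp)
    rw [Finset.filter_filter, Finset.filter_filter] at h
    exact h.symm
  -- the non-special parts agree
  have hrest : (univ.filter (fun q : (V × V) × Fin α × Fin α =>
        (q.1.1 < q.1.2 ∧ G.Adj q.1.1 q.1.2 ∧ q.2.1 < q.2.2 ∧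
          PDdisagree (P' q.1.1) (P' q.1.2) q.2.1 q.2.2) ∧ ¬ sp q))
      = (univ.filter (fun q : (V × V) × Fin α × Fin α =>
        (q.1.1 < q.1.2 ∧ G.Adj q.1.1 q.1.2 ∧ q.2.1 < q.2.2 ∧
          PDdisagree (P q.1.1) (P q.1.2) q.2.1 q.2.2) ∧ ¬ sp q)) := by
    apply Finset.filter_congr
    rintro ⟨⟨u, w⟩, ⟨c, d⟩⟩ _
    dsimp only
    refine and_congr_left fun hnsp => ?_
    refine and_congr_right fun h1 => and_congr_right fun _ =>
      and_congr_right fun h3 => ?_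
    have hcd : c ≠ d := h3.ne
    by_cases huv : u = v
    · subst huv
      have hwv : w ≠ u := h1.ne'
      rw [hPv', hPu' w hwv]
      have hne : ¬ (c = a ∧ d = b) := by
        rintro ⟨rfl, rfl⟩; exact hnsp ⟨rfl, Or.inl rfl⟩
      have hne2 : ¬ (c = b ∧ d = a) := by
        rintro ⟨rfl, rfl⟩; exact absurd (h3.trans hab) (lt_irrefl _)
      exact pd_keep σ (P w) hab.ne hadj hcd hne hne2
    · by_cases hwv : w = v
      · subst hwv
        rw [hPu' u huv, hPv', pd_comm, pd_comm (P u) (P w)]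
        have hne : ¬ (c = a ∧ d = b) := by
          rintro ⟨rfl, rfl⟩; exact hnsp ⟨rfl, Or.inr rfl⟩
        have hne2 : ¬ (c = b ∧ d = a) := by
          rintro ⟨rfl, rfl⟩; exact absurd (h3.trans hab) (lt_irrefl _)
        exact pd_keep σ (P u) hab.ne hadj hcd hne hne2
      · rw [hPu' u huv, hPu' w hwv]
  -- the special parts count (dis)agreeing neighbors
  have hspec : ∀ Q : V → (Fin α ≃ Fin α),
      (univ.filter (fun q : (V × V) × Fin α × Fin α =>
        (q.1.1 < q.1.2 ∧ G.Adj q.1.1 q.1.2 ∧ q.2.1 < q.2.2 ∧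
          PDdisagree (Q q.1.1) (Q q.1.2) q.2.1 q.2.2) ∧ sp q)).card
      = ((G.neighborFinset v).filter (fun u => PDdisagree (Q v) (Q u) a b)).card := by
    intro Q
    apply Finset.card_bij' (fun q _ => if q.1.1 = v then q.1.2 else q.1.1)
      (fun u _ => (if u < v then (u, v) else (v, u), (a, b)))
    · rintro ⟨⟨u, w⟩, ⟨c, d⟩⟩ hq
      simp only [mem_filter, mem_univ, true_and, hsp] at hq
      obtain ⟨⟨h1, h2, h3, h4⟩, hpr, hor⟩ := hq
      have hca : c = a := congrArg Prod.fst hpr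
      have hdb : d = b := congrArg Prod.snd hpr
      subst hca; subst hdb
      dsimp only at *
      by_cases huv : u = v
      · subst huv
        simp only [if_pos rfl, mem_filter, SimpleGraph.mem_neighborFinset]
        exact ⟨h2, h4⟩
      · have hwv : w = v := hor.resolve_left huv
        subst hwv
        simp only [if_neg huv, mem_filter, SimpleGraph.mem_neighborFinset]
        exact ⟨h2.symm, (pd_comm _ _ _ _).mpr h4⟩
    · intro u hu
      simp only [mem_filter, SimpleGraph.mem_neighborFinset] at hu
      obtain ⟨hadj', hdis⟩ := hu
      have hune : u ≠ v := (G.ne_of_adj hadj').symm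
      simp only [mem_filter, mem_univ, true_and, hsp]
      by_cases hlt : u < v
      · simp only [if_pos hlt]
        refine ⟨⟨hlt, hadj'.symm, hab, (pd_comm _ _ _ _).mp hdis⟩, ?_⟩
        simp
      · simp only [if_neg hlt]
        refine ⟨⟨lt_of_le_of_ne (not_lt.mp hlt) hune.symm, hadj', hab, hdis⟩, ?_⟩
        simp
    · rintro ⟨⟨u, w⟩, ⟨c, d⟩⟩ hq
      simp only [mem_filter, mem_univ, true_and, hsp] at hq
      obtain ⟨⟨h1, h2, h3, h4⟩, hpr, hor⟩ := hq
      dsimp only at *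
      by_cases huv : u = v
      · subst huv
        have hnlt : ¬ w < u := not_lt.mpr h1.le
        have e1 : (if u = u then w else u) = w := if_pos rfl
        rw [e1, if_neg hnlt]
        exact Prod.ext rfl hpr.symm
      · have hwv : w = v := hor.resolve_left huv
        subst hwv
        simp only [if_neg huv, if_pos h1]
        exact Prod.ext rfl hpr.symm
    · intro u hu
      simp only [mem_filter, SimpleGraph.mem_neighborFinset] at hu
      have hune : u ≠ v := (G.ne_of_adj hu.1).symm
      by_cases hlt : u < v
      · simp only [if_pos hlt, if_neg hune]
      · simp only [if_neg hlt]
        simp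
  -- the special part flips
  have hflip : ((G.neighborFinset v).filter (fun u => PDdisagree (P' v) (P' u) a b))
      = ((G.neighborFinset v).filter (fun u => ¬ PDdisagree (P v) (P u) a b)) := by
    apply Finset.filter_congr
    intro u hu
    have hune : u ≠ v := (G.ne_of_adj ((G.mem_neighborFinset v u).mp hu)).symm
    rw [hPu' u hune, hPv']
    exact pd_flip σ (P u) hab.ne
  have hcards := Finset.card_filter_add_card_filter_not
    (s := G.neighborFinset v) (p := fun u => PDdisagree (P v) (P u) a b)
  rw [G.card_neighborFinset_eq_degree] at hcards
  have hle := Finset.card_filter_le (G.neighborFinset v)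
    (fun u => PDdisagree (P v) (P u) a b)
  rw [hsplit P', hsplit P, hrest, hspec P', hspec P, hflip]
  have hmaj' : G.degree v <
      2 * ((G.neighborFinset v).filter (fun u => PDdisagree (P v) (P u) a b)).card := hmaj
  omega

theorem stmt_12 {V : Type*} [Fintype V] [LinearOrder V] (G : SimpleGraph V)
    [DecidableRel G.Adj] (α : ℕ) (hα : 3 ≤ α)
    (P : V → (Fin α ≃ Fin α)) (v : V) (a b : Fin α) (hab : a ≠ b)
    (hadj : ((P v a : ℕ) + 1 = (P v b : ℕ)) ∨ ((P v b : ℕ) + 1 = (P v a : ℕ)))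
    (hmaj : G.degree v <
      2 * ((G.neighborFinset v).filter (fun u => PDdisagree (P v) (P u) a b)).card) :
    (∀ Q : V → (Fin α ≃ Fin α),
        0 ≤ PDpotential G Q ∧ PDpotential G Q ≤ G.edgeFinset.card * Nat.choose α 2) ∧
    PDpotential G (Function.update P v ((Equiv.swap a b).trans (P v))) + 1 ≤
      PDpotential G P := by
  refine ⟨fun Q => ⟨Nat.zero_le _, pd_bound G Q⟩, ?_⟩
  rcases lt_or_gt_of_ne hab with h | h
  · exact pd_main G P v a b h hadj hmaj
  · have hmaj' : G.degree v < 2 * ((G.neighborFinset v).filter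
        (fun u => PDdisagree (P v) (P u) b a)).card := by
      rwa [Finset.filter_congr
        (fun u _ => pd_symm (P v) (P u) (Ne.symm hab))]
    rw [show Equiv.swap a b = Equiv.swap b a from Equiv.swap_comm a b]
    exact pd_main G P v b a h hadj.symm hmaj'
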